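/- The conditional covariance α_n satisfies α_n^2 ≤ (N - n + 1) δ_n almost surely, so that β_n α_n = α_n^2/δ_n ≤ N - n + 1 wherever δ_n > 0. -/

import Mathlib

open MeasureTheory Finset

/-- `A_n = ∑_{i=n}^N ω_i ∏_{j=n+1}^i (1 - β_j ΔS_j)`. -/
def Aproc {Ω : Type*} (N : ℕ) (w β ΔS : ℕ → Ω → ℝ) (n : ℕ) (x : Ω) : ℝ :=
  ∑ i ∈ Finset.Icc n N, w i x * ∏ j ∈ Finset.Icc (n + 1) i, (1 - β j x * ΔS j x)

/-- `D_n = ∑_{i=n}^N ω_i ∏_{j=n+1}^i (1 - β_j ΔS_j)²`. -/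
def Dproc {Ω : Type*} (N : ℕ) (w β ΔS : ℕ → Ω → ℝ) (n : ℕ) (x : Ω) : ℝ :=
  ∑ i ∈ Finset.Icc n N, w i x * ∏ j ∈ Finset.Icc (n + 1) i, (1 - β j x * ΔS j x) ^ 2

/-- If `|a| ≤ (q b + 1/q)/2` for every positive rational `q`, then `a² ≤ b`. -/
lemma aux_rat (a b : ℝ) (h : ∀ q : ℚ, 0 < q → |a| ≤ ((q : ℝ) * b + 1 / q) / 2) :
    a ^ 2 ≤ b := by
  have hb : 0 ≤ b := by
    by_contra hb
    push_neg at hb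
    obtain ⟨q, hq⟩ := exists_rat_gt (max 1 (1 / (-b)))
    have h1 : (1 : ℝ) < q := lt_of_le_of_lt (le_max_left _ _) hq
    have h2 : 1 / (-b) < (q : ℝ) := lt_of_le_of_lt (le_max_right _ _) hq
    have hq0 : (0 : ℚ) < q := by exact_mod_cast lt_trans one_pos h1
    have hnb : (0 : ℝ) < -b := neg_pos.mpr hb
    have hqb : (q : ℝ) * b < -1 := by
      rw [div_lt_iff₀ hnb] at h2
      nlinarith
    have hinv : 1 / (q : ℝ) < 1 := by
      rw [div_lt_one (by linarith)]; exact h1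
    have habs := abs_nonneg a
    linarith [h q hq0]
  have key : ∀ ε > (0 : ℝ), |a| ≤ Real.sqrt b + ε := by
    intro ε hε
    rcases eq_or_lt_of_le hb with hb0 | hbpos
    · obtain ⟨q, hq⟩ := exists_rat_gt (max 1 (1 / ε))
      have h1 : (1 : ℝ) < q := lt_of_le_of_lt (le_max_left _ _) hq
      have hq0 : (0 : ℚ) < q := by exact_mod_cast lt_trans one_pos h1
      have h2 : 1 / ε < (q : ℝ) := lt_of_le_of_lt (le_max_right _ _) hq
      have hinv : 1 / (q : ℝ) < ε := by
        rw [div_lt_iff₀ (by linarith)]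
        rw [div_lt_iff₀ hε] at h2
        nlinarith
      have hh := h q hq0
      have hb' : b = 0 := hb0.symm
      have hs : Real.sqrt b = 0 := by rw [hb']; simp
      rw [hb'] at hh
      rw [hs]
      simp only [mul_zero, zero_add] at hh
      linarith
    · set s := Real.sqrt b with hsdef
      have hs : 0 < s := Real.sqrt_pos.mpr hbpos
      have hss : s ^ 2 = b := Real.sq_sqrt hb
      have hlt : 1 / (s + ε) < 1 / s := by
        apply one_div_lt_one_div_of_lt hs; linarith
      obtain ⟨q, hq1, hq2⟩ := exists_rat_btwn hlt
      have hq0' : (0 : ℝ) < q := lt_trans (by positivity) hq1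
      have hq0 : (0 : ℚ) < q := by exact_mod_cast hq0'
      have hh := h q hq0
      have h1 : 1 < (q : ℝ) * (s + ε) := (div_lt_iff₀ (by linarith)).mp hq1
      have h1q : 1 / (q : ℝ) < s + ε := by
        rw [div_lt_iff₀ hq0']; nlinarith
      have hqs : (q : ℝ) * s < 1 := by
        rw [lt_div_iff₀ hs] at hq2; linarith
      have hqb : (q : ℝ) * b < s := by nlinarith
      linarith
  have habs : |a| ≤ Real.sqrt b := le_of_forall_pos_le_add key
  calc a ^ 2 = |a| ^ 2 := (sq_abs a).symm
    _ ≤ Real.sqrt b ^ 2 := pow_le_pow_left₀ (abs_nonneg a) habs 2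
    _ = b := Real.sq_sqrt hb

/-- The conditional covariance `α_n` satisfies `α_n² ≤ (N - n + 1) δ_n` a.s., so that
`β_n α_n = α_n² / δ_n ≤ N - n + 1` wherever `δ_n > 0`. -/
theorem stmt_6 {Ω : Type*} {m0 : MeasurableSpace Ω} (μ : Measure Ω) [IsProbabilityMeasure μ]
    (N : ℕ) (ℱ : Filtration ℕ m0) (ΔS w : ℕ → Ω → ℝ) (αp δp β : ℕ → Ω → ℝ)
    (hw : ∀ n x, w n x ∈ Set.Icc (0 : ℝ) 1)
    (hwa : ∀ n, StronglyMeasurable[ℱ n] (w n))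
    (hSa : ∀ n, StronglyMeasurable[ℱ n] (ΔS n))
    (hSloc : ∀ n, Integrable (fun x => ΔS n x ^ 2) μ)
    (hβ : ∀ n x, β n x = αp n x / δp n x)
    (hβ0 : ∀ x, β 0 x = 0)
    (hα : ∀ n ∈ Finset.Icc 1 N,
      αp n =ᵐ[μ] μ[fun x => ΔS n x * Aproc N w β ΔS n x | ℱ (n - 1)])
    (hδ : ∀ n ∈ Finset.Icc 1 N,
      δp n =ᵐ[μ] μ[fun x => ΔS n x ^ 2 * Dproc N w β ΔS n x | ℱ (n - 1)])
    (hAint : ∀ n, Integrable (Aproc N w β ΔS n) μ)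
    (hDint : ∀ n, Integrable (Dproc N w β ΔS n) μ)
    (hSAint : ∀ n, Integrable (fun x => ΔS n x * Aproc N w β ΔS n x) μ)
    (hSDint : ∀ n, Integrable (fun x => ΔS n x ^ 2 * Dproc N w β ΔS n x) μ) :
    ∀ n ∈ Finset.Icc 1 N,
      ∀ᵐ x ∂μ, αp n x ^ 2 ≤ ((N : ℝ) - n + 1) * δp n x ∧
        (0 < δp n x → αp n x ^ 2 / δp n x ≤ (N : ℝ) - n + 1) := by
  intro n hn
  rw [Finset.mem_Icc] at hn
  obtain ⟨hn1, hnN⟩ := hn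
  set K : ℝ := (N : ℝ) - n + 1 with hKdef
  have hK1 : (1 : ℝ) ≤ K := by
    have : (n : ℝ) ≤ N := by exact_mod_cast hnN
    simp only [hKdef]; linarith
  have hK0 : (0 : ℝ) < K := lt_of_lt_of_le one_pos hK1
  set m := ℱ (n - 1) with hmdef
  set f : Ω → ℝ := fun x => ΔS n x * Aproc N w β ΔS n x with hfdef
  set g : Ω → ℝ := fun x => ΔS n x ^ 2 * Dproc N w β ΔS n x with hgdef
  -- pointwise nonnegativity of D and g
  have hD0 : ∀ x, 0 ≤ Dproc N w β ΔS n x := by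
    intro x
    apply Finset.sum_nonneg
    intro i _
    exact mul_nonneg (hw i x).1 (Finset.prod_nonneg fun j _ => sq_nonneg _)
  have hg0 : ∀ x, 0 ≤ g x := fun x => mul_nonneg (sq_nonneg _) (hD0 x)
  -- pointwise Cauchy–Schwarz: f² ≤ K g
  have hCS : ∀ x, f x ^ 2 ≤ K * g x := by
    intro x
    have hA2 : Aproc N w β ΔS n x ^ 2 ≤
        (∑ i ∈ Finset.Icc n N, w i x) * Dproc N w β ΔS n x := by
      apply Finset.sum_sq_le_sum_mul_sum_of_sq_eq_mul
      · intro i _; exact (hw i x).1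
      · intro i _; exact mul_nonneg (hw i x).1 (Finset.prod_nonneg fun j _ => sq_nonneg _)
      · intro i _
        rw [Finset.prod_pow]
        ring
    have hsum : (∑ i ∈ Finset.Icc n N, w i x) ≤ K := by
      calc (∑ i ∈ Finset.Icc n N, w i x) ≤ (Finset.Icc n N).card • (1 : ℝ) :=
            Finset.sum_le_card_nsmul _ _ 1 fun i _ => (hw i x).2
        _ = ((N + 1 - n : ℕ) : ℝ) := by rw [Nat.card_Icc]; simp
        _ = K := by
            rw [Nat.cast_sub (by omega)]
            push_cast
            ring
    have hA2' : Aproc N w β ΔS n x ^ 2 ≤ K * Dproc N w β ΔS n x :=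
      hA2.trans (mul_le_mul_of_nonneg_right hsum (hD0 x))
    calc f x ^ 2 = ΔS n x ^ 2 * Aproc N w β ΔS n x ^ 2 := by simp [hfdef]; ring
      _ ≤ ΔS n x ^ 2 * (K * Dproc N w β ΔS n x) :=
          mul_le_mul_of_nonneg_left hA2' (sq_nonneg _)
      _ = K * g x := by simp [hgdef]; ring
  -- pointwise bound by the AM-GM trick
  have hptq : ∀ (q : ℚ), 0 < q → ∀ x, |f x| ≤ ((q : ℝ) * (K * g x) + 1 / q) / 2 := by
    intro q hq x
    have hq' : (0 : ℝ) < q := by exact_mod_cast hq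
    set t : ℝ := K * g x with htdef
    have ht : 0 ≤ t := mul_nonneg hK0.le (hg0 x)
    have h1 : |f x| ≤ Real.sqrt t := by
      rw [← Real.sqrt_sq_eq_abs]
      exact Real.sqrt_le_sqrt (hCS x)
    have h2 : Real.sqrt t ≤ ((q : ℝ) * t + 1 / q) / 2 := by
      have hsq := Real.sq_sqrt ht
      have hst := Real.sqrt_nonneg t
      have hkey : 2 * (q : ℝ) * Real.sqrt t ≤ (q : ℝ) ^ 2 * t + 1 := by
        nlinarith [sq_nonneg ((q : ℝ) * Real.sqrt t - 1)]
      have hqq : (q : ℝ) * (1 / q) = 1 := mul_one_div_cancel (ne_of_gt hq')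
      nlinarith [hkey, hq', hqq]
    linarith
  -- conditional expectation step, for each fixed rational q
  have hcond : ∀ (q : ℚ), 0 < q →
      ∀ᵐ x ∂μ, |(μ[f|m]) x| ≤ ((q : ℝ) * (K * (μ[g|m]) x) + 1 / q) / 2 := by
    intro q hq
    have hq' : (0 : ℝ) < q := by exact_mod_cast hq
    set c : ℝ := (q : ℝ) * K / 2 with hcdef
    set d : ℝ := 1 / (2 * (q : ℝ)) with hddef
    have hint1 : Integrable (fun x => c * g x) μ := (hSDint n).const_mul c
    have hint : Integrable ((fun x => c * g x) + fun _ => d) μ :=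
      hint1.add (integrable_const d)
    have hsmul : μ[fun x => c * g x|m] =ᵐ[μ] fun x => c * (μ[g|m]) x := by
      have hrw : (fun x => c * g x) = c • g := rfl
      rw [hrw]
      filter_upwards [condExp_smul (μ := μ) c g m] with x hx
      rw [hx]
      simp
    have hadd : μ[(fun x => c * g x) + (fun _ => d)|m] =ᵐ[μ]
        μ[fun x => c * g x|m] + μ[(fun _ => d : Ω → ℝ)|m] :=
      condExp_add hint1 (integrable_const d) m
    have h4 : μ[(fun _ => d : Ω → ℝ)|m] = fun _ => d := condExp_const (ℱ.le (n - 1)) d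
    have hcond_hqf : μ[(fun x => c * g x) + (fun _ => d)|m] =ᵐ[μ]
        fun x => c * (μ[g|m]) x + d := by
      filter_upwards [hadd, hsmul] with x hx hsx
      simp only [Pi.add_apply] at hx
      rw [hx, h4, hsx]
    have hub : ∀ x, ((fun x => c * g x) + fun _ => d : Ω → ℝ) x
        = ((q : ℝ) * (K * g x) + 1 / q) / 2 := by
      intro x
      simp only [Pi.add_apply, hcdef, hddef]
      field_simp
    have hfle : f ≤ᵐ[μ] ((fun x => c * g x) + fun _ => d) := ae_of_all _ fun x => by
      rw [hub x]; exact le_trans (le_abs_self (f x)) (hptq q hq x)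
    have hnle : (-f) ≤ᵐ[μ] ((fun x => c * g x) + fun _ => d) := ae_of_all _ fun x => by
      rw [hub x]; exact le_trans (neg_le_abs (f x)) (hptq q hq x)
    have hm1 : μ[f|m] ≤ᵐ[μ] μ[(fun x => c * g x) + (fun _ => d)|m] :=
      condExp_mono (hSAint n) hint hfle
    have hm2 : μ[-f|m] ≤ᵐ[μ] μ[(fun x => c * g x) + (fun _ => d)|m] :=
      condExp_mono (hSAint n).neg hint hnle
    have hneg : μ[-f|m] =ᵐ[μ] -μ[f|m] := condExp_neg f m
    filter_upwards [hm1, hm2, hneg, hcond_hqf] with x h1x h2x h3x h4x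
    rw [h3x] at h2x
    simp only [Pi.neg_apply] at h2x
    rw [h4x] at h1x h2x
    have hcd : c * (μ[g|m]) x + d = ((q : ℝ) * (K * (μ[g|m]) x) + 1 / q) / 2 := by
      simp only [hcdef, hddef]
      field_simp
    rw [abs_le]
    constructor
    · linarith [h2x, hcd]
    · linarith [h1x, hcd]
  have hae : ∀ᵐ x ∂μ, ∀ q : ℚ, 0 < q →
      |(μ[f|m]) x| ≤ ((q : ℝ) * (K * (μ[g|m]) x) + 1 / q) / 2 := by
    rw [ae_all_iff]
    intro q
    by_cases hq : 0 < q
    · filter_upwards [hcond q hq] with x hx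
      intro _; exact hx
    · filter_upwards with x hq'; exact absurd hq' hq
  have hαn := hα n (Finset.mem_Icc.mpr ⟨hn1, hnN⟩)
  have hδn := hδ n (Finset.mem_Icc.mpr ⟨hn1, hnN⟩)
  filter_upwards [hae, hαn, hδn] with x h1 h2 h3
  have hkey : αp n x ^ 2 ≤ K * δp n x := by
    apply aux_rat
    intro q hq
    rw [h2, h3]
    exact h1 q hq
  refine ⟨hkey, fun hpos => ?_⟩
  rw [div_le_iff₀ hpos]
  linarith [hkey]
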